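/- For every k ≥ 1, the number of distinct unions of neighborhoods across the cut (A(R_k), B(R_k)) of R_k equals the number of GF(2)-linear subspaces of the vector space (ZMod 2)^k. That is, the cardinality of { ⋃_{S ∈ 𝒴} {T ⊆ {1,…,k} : |S ∩ T| is odd} : 𝒴 a family of subsets of {1,…,k} } equals the number of ZMod 2-submodules of Fin k → ZMod 2. (This is the paper's Lemma 3: β_{R_k}(A(R_k)) = log₂ nss_{R_k}(A(R_k)).) -/

import Mathlib

open LinearMap

namespace RkUnions

noncomputable section

variable {k : ℕ}

/-- Indicator bijection from finsets to GF(2)-vectors. -/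
def phi (S : Finset (Fin k)) : Fin k → ZMod 2 := fun i => if i ∈ S then 1 else 0

lemma phi_bijective : Function.Bijective (phi (k := k)) := by
  constructor
  · intro S T h
    ext i
    have := congrFun h i
    simp only [phi] at this
    by_cases hS : i ∈ S <;> by_cases hT : i ∈ T <;> simp [hS, hT] at this ⊢
  · intro x
    refine ⟨Finset.univ.filter (fun i => x i = 1), ?_⟩
    ext i
    simp only [phi, Finset.mem_filter, Finset.mem_univ, true_and]
    rcases (by decide : ∀ a : ZMod 2, a = 0 ∨ a = 1) (x i) with h | h <;> simp [h]

/-- The standard dot product bilinear form on `(ZMod 2)^k`. -/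
def dotB (k : ℕ) : LinearMap.BilinForm (ZMod 2) (Fin k → ZMod 2) :=
  LinearMap.mk₂ (ZMod 2) (fun x y => ∑ i, x i * y i)
    (fun x x' y => by simp [add_mul, Finset.sum_add_distrib])
    (fun c x y => by simp [Finset.mul_sum, mul_assoc])
    (fun x y y' => by simp [mul_add, Finset.sum_add_distrib])
    (fun c x y => by
      simp only [Pi.smul_apply, smul_eq_mul, Finset.mul_sum]
      exact Finset.sum_congr rfl fun i _ => by ring)

lemma dotB_apply (x y : Fin k → ZMod 2) : dotB k x y = ∑ i, x i * y i := rfl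

lemma dotB_symm (x y : Fin k → ZMod 2) : dotB k x y = dotB k y x := by
  simp [dotB_apply, mul_comm]

lemma dotB_refl : (dotB k).IsRefl := fun x y h => by rwa [dotB_symm] at h

lemma dotB_nondeg : (dotB k).Nondegenerate := by
  refine (fun hL : (dotB k).SeparatingLeft =>
    ⟨hL, fun y hy => hL y fun x => by rw [dotB_symm]; exact hy x⟩) ?_
  intro x hx
  ext j
  have := hx (Pi.single j 1)
  rw [dotB_apply] at this
  simpa [Pi.single_apply, Finset.sum_ite_eq', mul_comm] using this

lemma dotB_phi (S T : Finset (Fin k)) :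
    dotB k (phi S) (phi T) = ((S ∩ T).card : ZMod 2) := by
  rw [dotB_apply]
  rw [Finset.card_eq_sum_ones (S ∩ T), Nat.cast_sum]
  rw [← Finset.sum_subset (Finset.subset_univ (S ∩ T))]
  · apply Finset.sum_congr rfl
    intro i hi
    simp only [Finset.mem_inter] at hi
    simp [phi, hi.1, hi.2]
  · intro i _ hi
    simp only [Finset.mem_inter, not_and_or] at hi
    rcases hi with h | h <;> simp [phi, h]

lemma odd_iff_dot (S T : Finset (Fin k)) :
    Odd (S ∩ T).card ↔ dotB k (phi S) (phi T) = 1 := by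
  rw [dotB_phi, Nat.odd_iff, ← ZMod.natCast_mod]
  rcases Nat.mod_two_eq_zero_or_one (S ∩ T).card with h | h <;>
    rw [h] <;> simp

lemma not_odd_iff_dot (S T : Finset (Fin k)) :
    ¬ Odd (S ∩ T).card ↔ dotB k (phi S) (phi T) = 0 := by
  rw [odd_iff_dot]
  have : ∀ a : ZMod 2, ¬ a = 1 ↔ a = 0 := by decide
  exact this _

/-- Membership in the orthogonal of a span, via generators. -/
lemma mem_orth_span_iff (𝒴 : Set (Finset (Fin k))) (x : Fin k → ZMod 2) :
    x ∈ (dotB k).orthogonal (Submodule.span (ZMod 2) (phi '' 𝒴)) ↔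
      ∀ S ∈ 𝒴, dotB k (phi S) x = 0 := by
  rw [LinearMap.BilinForm.mem_orthogonal_iff]
  constructor
  · intro h S hS
    exact h _ (Submodule.subset_span ⟨S, hS, rfl⟩)
  · intro h n hn
    have hle : Submodule.span (ZMod 2) (phi '' 𝒴) ≤ LinearMap.ker ((dotB k).flip x) := by
      rw [Submodule.span_le]
      rintro _ ⟨S, hS, rfl⟩
      simpa [LinearMap.mem_ker] using h S hS
    exact hle hn

/-- Key complement identity. -/
lemma compl_union_eq (𝒴 : Set (Finset (Fin k))) :
    (⋃ S ∈ 𝒴, {T : Finset (Fin k) | Odd (S ∩ T).card})ᶜ =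
      phi ⁻¹' ((dotB k).orthogonal (Submodule.span (ZMod 2) (phi '' 𝒴)) : Set _) := by
  ext T
  simp only [Set.mem_compl_iff, Set.mem_iUnion, Set.mem_setOf_eq, not_exists,
    Set.mem_preimage, SetLike.mem_coe, mem_orth_span_iff]
  constructor
  · intro h S hS
    exact (not_odd_iff_dot S T).1 (h S hS)
  · intro h S hS
    exact (not_odd_iff_dot S T).2 (h S hS)

end

end RkUnions

/-- for `k ≥ 1`, the number of distinct unions of neighborhoods across
the cut `(A(R_k), B(R_k))` of `R_k` equals the number of GF(2)-linear subspaces of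
`(ZMod 2)^k`: the cardinality of
`{ ⋃_{S ∈ 𝒴} {T : |S ∩ T| odd} : 𝒴 a family of subsets of {1,…,k} }` equals the
number of `ZMod 2`-submodules of `Fin k → ZMod 2`. -/
theorem rk_unions_card_eq_card_submodules (k : ℕ) (hk : 1 ≤ k) :
    Set.ncard {U : Set (Finset (Fin k)) |
        ∃ 𝒴 : Set (Finset (Fin k)),
          U = ⋃ S ∈ 𝒴, {T : Finset (Fin k) | Odd (S ∩ T).card}} =
      Nat.card (Submodule (ZMod 2) (Fin k → ZMod 2)) := by
  classical
  open RkUnions in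
  rw [← Nat.card_coe_set_eq]
  set P := {U : Set (Finset (Fin k)) |
      ∃ 𝒴 : Set (Finset (Fin k)),
        U = ⋃ S ∈ 𝒴, {T : Finset (Fin k) | Odd (S ∩ T).card}}
  -- the map sending a union to the orthogonal of the span of its generating family
  have hmem : ∀ U : P, U.1 ∈ P := fun U => U.2
  let f : P → Submodule (ZMod 2) (Fin k → ZMod 2) := fun U =>
    (dotB k).orthogonal (Submodule.span (ZMod 2) (phi '' (hmem U).choose))
  have hf : ∀ U : P, phi ⁻¹' (f U : Set _) = (U.1)ᶜ := by
    intro U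
    have hspec := (hmem U).choose_spec
    show phi ⁻¹' (((dotB k).orthogonal (Submodule.span (ZMod 2)
        (phi '' (hmem U).choose))) : Set _) = (U.1)ᶜ
    rw [← compl_union_eq, ← hspec]
  have hpre_inj : Function.Injective
      (fun s : Set (Fin k → ZMod 2) => phi (k := k) ⁻¹' s) :=
    fun s t h => by
      ext x
      obtain ⟨T, rfl⟩ := phi_bijective.2 x
      exact Set.ext_iff.1 h T
  apply Nat.card_eq_of_bijective f
  constructor
  · intro U V h
    apply Subtype.ext
    have := congrArg (fun W : Submodule (ZMod 2) (Fin k → ZMod 2) =>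
      phi (k := k) ⁻¹' (W : Set _)) h
    simp only [hf] at this
    exact compl_injective this
  · intro W
    haveI : Fact (Nat.Prime 2) := ⟨by norm_num⟩
    set 𝒴 := phi (k := k) ⁻¹' ((dotB k).orthogonal W : Set _) with h𝒴
    refine ⟨⟨⋃ S ∈ 𝒴, {T : Finset (Fin k) | Odd (S ∩ T).card}, 𝒴, rfl⟩, ?_⟩
    apply SetLike.coe_injective
    apply hpre_inj
    beta_reduce
    rw [hf]
    rw [compl_union_eq 𝒴]
    congr 1
    have himg : phi (k := k) '' 𝒴 = ((dotB k).orthogonal W : Set _) :=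
      Set.image_preimage_eq _ phi_bijective.2
    rw [himg, Submodule.span_coe_eq_restrictScalars, Submodule.restrictScalars_self]
    rw [LinearMap.BilinForm.orthogonal_orthogonal dotB_nondeg dotB_refl W]
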